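/- Let $\alpha \geq \beta > 0$, $\sigma > 0$, $\eta = \alpha\beta$, and let $\mu_{\alpha,\beta,\sigma}$ be the gamma distribution (if $\alpha = \beta$) or the negative binomial distribution (if $\alpha > \beta$). Then for every $n \geq 1$, the $n$-th moment is $\int x^n \, \mu_{\alpha,\beta,\sigma}(dx) = \sum_{k=1}^n (\alpha-\beta)^{n-k} S(n,k)\,(\sigma/\alpha \mid -\beta)_k$. -/

import Mathlib

open MeasureTheory

section Aux

open Real Set
open scoped ENNReal NNReal

private lemma hasSum_exp_div' (y : ℝ) : HasSum (fun l : ℕ => y ^ l / l.factorial) (Real.exp y) := by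
  rw [Real.exp_eq_exp_ℝ]
  exact NormedSpace.expSeries_div_hasSum_exp y

private lemma prod_eq_gamma' {c : ℝ} (hc : 0 < c) (l : ℕ) :
    ∏ j ∈ Finset.range l, (c + j) = Real.Gamma (c + l) / Real.Gamma c := by
  induction l with
  | zero => simp [div_self (Real.Gamma_pos_of_pos hc).ne']
  | succ l ih =>
      rw [Finset.prod_range_succ, ih]
      have h1 : c + (l + 1 : ℕ) = (c + l) + 1 := by push_cast; ring
      rw [h1, Real.Gamma_add_one (by positivity)]
      field_simp

private lemma hasSum_negBinom' {c p : ℝ} (hc : 0 < c) (hp0 : 0 ≤ p) (hp1 : p < 1) :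
    HasSum (fun l : ℕ => p ^ l * (l.factorial : ℝ)⁻¹ * ∏ j ∈ Finset.range l, (c + j))
      ((1 - p) ^ (-c)) := by
  have h1p : (0:ℝ) < 1 - p := by linarith
  set μ := volume.restrict (Ioi (0:ℝ)) with hμ
  set f : ℕ → ℝ → ℝ := fun l x => p ^ l * (l.factorial : ℝ)⁻¹ * (Real.exp (-x) * x ^ (c + l - 1))
    with hf
  set b : ℕ → ℝ := fun l => p ^ l * (l.factorial : ℝ)⁻¹ * Real.Gamma (c + l) with hb
  have hcl : ∀ l : ℕ, (0:ℝ) < c + l := fun l => by positivity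
  have hbnn : ∀ l, 0 ≤ b l := fun l => by
    have := (Real.Gamma_pos_of_pos (hcl l)).le
    positivity
  have hint : ∀ l, Integrable (f l) μ :=
    fun l => ((Real.GammaIntegral_convergent (hcl l)).const_mul _)
  have hnn : ∀ l, 0 ≤ᵐ[μ] f l := by
    intro l
    filter_upwards [ae_restrict_mem measurableSet_Ioi] with x hx
    have : (0:ℝ) ≤ x := le_of_lt hx
    positivity
  have hIl : ∀ l, ∫⁻ x, ENNReal.ofReal (f l x) ∂μ = ENNReal.ofReal (b l) := by
    intro l
    rw [← ofReal_integral_eq_lintegral_ofReal (hint l) (hnn l)]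
    congr 1
    rw [hf, hb]
    simp only
    rw [MeasureTheory.integral_const_mul, Real.Gamma_eq_integral (hcl l)]
  have hptsum : ∀ x ∈ Ioi (0:ℝ), HasSum (fun l => f l x)
      (x ^ (c - 1) * Real.exp (-((1-p) * x))) := by
    intro x hx
    have hx0 : (0:ℝ) < x := hx
    have h := (hasSum_exp_div' (p * x)).mul_left (Real.exp (-x) * x ^ (c - 1))
    have hfun : (fun l : ℕ => Real.exp (-x) * x ^ (c-1) * ((p*x)^l / l.factorial))
        = fun l => f l x := by
      funext l
      rw [hf]
      simp only
      rw [mul_pow, show c + (l:ℝ) - 1 = (c - 1) + l by ring, Real.rpow_add hx0,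
        Real.rpow_natCast]
      field_simp
    have hval : Real.exp (-x) * x ^ (c-1) * Real.exp (p*x)
        = x ^ (c-1) * Real.exp (-((1-p)*x)) := by
      rw [show -((1-p)*x) = -x + p*x by ring, Real.exp_add]
      ring
    rw [hfun, hval] at h
    exact h
  have key : ∑' l, ENNReal.ofReal (b l) =
      ENNReal.ofReal ((1 / (1-p)) ^ c * Real.Gamma c) := by
    have hmeas : ∀ l : ℕ, AEMeasurable (fun x => ENNReal.ofReal (f l x)) μ := by
      intro l
      apply AEMeasurable.ennreal_ofReal
      apply AEMeasurable.const_mul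
      apply AEMeasurable.mul
      · exact (measurable_id.neg.exp).aemeasurable
      · apply ContinuousOn.aemeasurable _ measurableSet_Ioi
        intro x hx
        exact (Real.continuousAt_rpow_const x _ (Or.inl (ne_of_gt hx))).continuousWithinAt
    calc ∑' l, ENNReal.ofReal (b l) = ∑' l, ∫⁻ x, ENNReal.ofReal (f l x) ∂μ := by
          simp_rw [hIl]
      _ = ∫⁻ x, ∑' l, ENNReal.ofReal (f l x) ∂μ := (lintegral_tsum hmeas).symm
      _ = ∫⁻ x, ENNReal.ofReal (x ^ (c - 1) * Real.exp (-((1-p) * x))) ∂μ := by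
          apply lintegral_congr_ae
          filter_upwards [ae_restrict_mem measurableSet_Ioi] with x hx
          have hs := hptsum x hx
          rw [← hs.tsum_eq, ← ENNReal.ofReal_tsum_of_nonneg _ hs.summable]
          intro l
          have : (0:ℝ) ≤ x := le_of_lt hx
          positivity
      _ = ENNReal.ofReal ((1 / (1-p)) ^ c * Real.Gamma c) := by
          rw [← ofReal_integral_eq_lintegral_ofReal]
          · rw [← Real.integral_rpow_mul_exp_neg_mul_Ioi hc h1p]
          · apply (integrableOn_rpow_mul_exp_neg_mul_rpow (p := 1) (s := c - 1) (b := 1 - p)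
              (by linarith) one_pos h1p).congr_fun ?_ measurableSet_Ioi
            intro x hx
            simp only [Real.rpow_one]
            ring_nf
          · filter_upwards [ae_restrict_mem measurableSet_Ioi] with x hx
            have : (0:ℝ) ≤ x := le_of_lt hx
            positivity
  have hne : ∑' l, ENNReal.ofReal (b l) ≠ ⊤ := by rw [key]; exact ENNReal.ofReal_ne_top
  have hsummb : Summable b := by
    have := ENNReal.summable_toReal hne
    simpa [ENNReal.toReal_ofReal, hbnn] using this
  have htsum : ∑' l, b l = (1 / (1-p)) ^ c * Real.Gamma c := by
    have h2 := ENNReal.ofReal_tsum_of_nonneg hbnn hsummb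
    rw [← h2] at key
    have hRnn : (0:ℝ) ≤ (1 / (1-p)) ^ c * Real.Gamma c := by
      have := (Real.Gamma_pos_of_pos hc).le
      positivity
    exact (ENNReal.ofReal_eq_ofReal_iff (tsum_nonneg hbnn) hRnn).mp key
  have hB : HasSum b ((1 / (1-p)) ^ c * Real.Gamma c) := htsum ▸ hsummb.hasSum
  have hG : Real.Gamma c ≠ 0 := (Real.Gamma_pos_of_pos hc).ne'
  have h2 : HasSum (fun l => b l * (Real.Gamma c)⁻¹) ((1/(1-p))^c) := by
    have := hB.mul_right (Real.Gamma c)⁻¹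
    rwa [mul_assoc, mul_inv_cancel₀ hG, mul_one] at this
  have hfun : (fun l => b l * (Real.Gamma c)⁻¹)
      = fun l => p ^ l * (l.factorial : ℝ)⁻¹ * ∏ j ∈ Finset.range l, (c + j) := by
    funext l
    rw [hb]
    simp only
    rw [prod_eq_gamma' hc]
    field_simp
  have hval : (1/(1-p) : ℝ)^c = (1-p)^(-c) := by
    rw [one_div, Real.inv_rpow h1p.le, ← Real.rpow_neg h1p.le]
  rw [hfun, hval] at h2
  exact h2

private lemma Snn_eq_one' {S : ℕ → ℕ → ℝ} {n : ℕ} (hn : 1 ≤ n)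
    (hS : ∀ z : ℝ, z ^ n = ∑ k ∈ Finset.Icc 1 n, S n k * ∏ j ∈ Finset.range k, (z - j)) :
    S n n = 1 := by
  open Polynomial in
  set Q : ℝ[X] := ∑ k ∈ Finset.Icc 1 n, C (S n k) * ∏ j ∈ Finset.range k, (X - C (j:ℝ))
    with hQ
  have hQX : Q = X ^ n := by
    apply Polynomial.funext
    intro z
    rw [hQ]
    simp only [eval_finset_sum, eval_mul, eval_C, eval_pow, eval_X, eval_prod, eval_sub,
      eval_natCast]
    exact (hS z).symm
  have hmono : ∀ k, (∏ j ∈ Finset.range k, (X - C (j:ℝ))).Monic := fun k =>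
    monic_prod_of_monic _ _ fun j _ => monic_X_sub_C _
  have hdeg : ∀ k, (∏ j ∈ Finset.range k, (X - C (j:ℝ))).natDegree = k := by
    intro k
    rw [natDegree_prod_of_monic _ _ fun j _ => monic_X_sub_C _]
    simp only [natDegree_X_sub_C]
    simp
  have hcoeff := congrArg (fun p : ℝ[X] => p.coeff n) hQX
  simp only [coeff_X_pow, if_pos rfl] at hcoeff
  rw [hQ, finset_sum_coeff] at hcoeff
  rw [Finset.sum_eq_single n] at hcoeff
  · rw [coeff_C_mul] at hcoeff
    have : (∏ j ∈ Finset.range n, (X - C (j:ℝ))).coeff n = 1 := by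
      have := (hmono n).coeff_natDegree
      rwa [hdeg n] at this
    rwa [this, mul_one] at hcoeff
  · intro k hk hkn
    rw [coeff_C_mul, coeff_eq_zero_of_natDegree_lt, mul_zero]
    rw [hdeg]
    exact lt_of_le_of_ne (Finset.mem_Icc.mp hk).2 hkn
  · intro h
    exact absurd (Finset.mem_Icc.mpr ⟨hn, le_rfl⟩) h

private lemma gamma_case' (α σ : ℝ) (hα : 0 < α) (hσ : 0 < σ) (n : ℕ) :
    ∫ x, x ^ n ∂(volume.withDensity fun x => ENNReal.ofReal (if 0 < x then
        (Real.Gamma (σ / (α * α)))⁻¹ * α ^ (-(σ / (α * α))) * x ^ (σ / (α * α) - 1)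
          * Real.exp (-x / α) else 0)) =
      α ^ n * ∏ j ∈ Finset.range n, (σ / (α * α) + j) := by
  set s := σ / (α * α) with hs
  have hs0 : 0 < s := by positivity
  set h : ℝ → ℝ := fun x => if 0 < x then
      (Real.Gamma s)⁻¹ * α ^ (-s) * x ^ (s - 1) * Real.exp (-x / α) else 0 with hh
  have hnn : ∀ x, 0 ≤ h x := by
    intro x
    rw [hh]
    dsimp only
    split
    · have hΓ := (Real.Gamma_pos_of_pos hs0).le
      have : (0:ℝ) ≤ α ^ (-s) := (Real.rpow_pos_of_pos hα _).le
      positivity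
    · exact le_rfl
  have hmeas : Measurable h := by
    rw [hh]
    apply Measurable.ite measurableSet_Ioi _ measurable_const
    fun_prop
  have h1 : (fun x => ENNReal.ofReal (h x)) = fun x => ((h x).toNNReal : ℝ≥0∞) := rfl
  rw [h1, integral_withDensity_eq_integral_smul (f := fun x => (h x).toNNReal)
    (measurable_real_toNNReal.comp hmeas)]
  have h2 : ∀ x : ℝ, (h x).toNNReal • (x ^ n : ℝ) = h x * x ^ n := by
    intro x
    rw [NNReal.smul_def, smul_eq_mul, Real.coe_toNNReal _ (hnn x)]
  simp_rw [h2]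
  have h3 : (fun x : ℝ => h x * x ^ n) = Set.indicator (Ioi 0) (fun x => h x * x ^ n) := by
    funext x
    by_cases hx : 0 < x
    · exact (Set.indicator_of_mem (show x ∈ Ioi (0:ℝ) from hx) (fun x => h x * x ^ n)).symm
    · rw [Set.indicator_of_notMem (show x ∉ Ioi (0:ℝ) from hx), hh]
      simp [if_neg hx]
  rw [h3, integral_indicator measurableSet_Ioi]
  have h4 : ∀ x ∈ Ioi (0:ℝ), h x * x ^ n
      = ((Real.Gamma s)⁻¹ * α ^ (-s)) * (x ^ (s + n - 1) * Real.exp (-(α⁻¹ * x))) := by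
    intro x hx
    have hx0 : (0:ℝ) < x := hx
    rw [hh]
    simp only [if_pos hx0]
    rw [show s + (n:ℝ) - 1 = (s - 1) + n by ring, Real.rpow_add hx0, Real.rpow_natCast,
      neg_div, div_eq_inv_mul, ← neg_mul]
    ring
  rw [setIntegral_congr_fun measurableSet_Ioi h4, MeasureTheory.integral_const_mul,
    Real.integral_rpow_mul_exp_neg_mul_Ioi (by positivity) (by positivity)]
  have h5 : (1 / α⁻¹ : ℝ) = α := by field_simp
  rw [h5]
  have h6 : α ^ (s + (n:ℝ)) = α ^ s * α ^ (n:ℕ) := by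
    rw [Real.rpow_add hα, Real.rpow_natCast]
  rw [h6, Real.rpow_neg hα.le, prod_eq_gamma' hs0]
  have hΓ : Real.Gamma s ≠ 0 := (Real.Gamma_pos_of_pos hs0).ne'
  have hαs : (α:ℝ) ^ s ≠ 0 := (Real.rpow_pos_of_pos hα _).ne'
  field_simp

private lemma fall_fact' : ∀ (k l : ℕ), ∏ j ∈ Finset.range k, (((l + k : ℕ):ℝ) - j)
    = ((l + k).factorial : ℝ) / (l.factorial : ℝ) := by
  intro k
  induction k with
  | zero =>
      intro l
      simp [div_self (Nat.cast_ne_zero.mpr l.factorial_ne_zero : (l.factorial:ℝ) ≠ 0)]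
  | succ k ih =>
      intro l
      rw [Finset.prod_range_succ]
      have h1 : l + (k+1) = (l+1) + k := by ring
      rw [h1, ih (l+1)]
      have h2 : ((((l+1) + k : ℕ):ℝ) - k) = (l:ℝ) + 1 := by push_cast; ring
      rw [h2]
      have h3 : ((l+1).factorial : ℝ) = (l+1) * l.factorial := by
        rw [Nat.factorial_succ]; push_cast; ring
      rw [h3]
      have h4 : (l.factorial : ℝ) ≠ 0 := Nat.cast_ne_zero.mpr l.factorial_ne_zero
      field_simp

private lemma hasSum_w_fall' (α β σ : ℝ) (hβ : 0 < β) (hlt : β < α) (hσ : 0 < σ) (k : ℕ) :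
    HasSum (fun m : ℕ => ((1 - β / α) ^ (σ / (α * β)) * (β / α) ^ m * ((m.factorial : ℝ))⁻¹ *
        ∏ j ∈ Finset.range m, (σ / (α * β) + j)) * ∏ j ∈ Finset.range k, ((m:ℝ) - j))
      ((β / (α - β)) ^ k * ∏ j ∈ Finset.range k, (σ / (α * β) + j)) := by
  have hα' : (0:ℝ) < α := hβ.trans hlt
  set p := β / α with hp
  set a := σ / (α * β) with ha
  have hp0 : 0 < p := by positivity
  have hp1 : p < 1 := (div_lt_one hα').mpr hlt
  have h1p : (0:ℝ) < 1 - p := by linarith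
  have hd : (0:ℝ) < α - β := by linarith
  have ha0 : 0 < a := by positivity
  set g : ℕ → ℝ := fun m => ((1 - p) ^ a * p ^ m * ((m.factorial : ℝ))⁻¹ *
      ∏ j ∈ Finset.range m, (a + j)) * ∏ j ∈ Finset.range k, ((m:ℝ) - j) with hg
  have hgzero : ∀ m ∈ Finset.range k, g m = 0 := by
    intro m hm
    rw [hg]
    simp only
    rw [Finset.prod_eq_zero hm (by simp), mul_zero]
  have hshift : (fun l : ℕ => ((1 - p) ^ a * p ^ k * ∏ j ∈ Finset.range k, (a + j)) *
      (p ^ l * ((l.factorial : ℝ))⁻¹ * ∏ j ∈ Finset.range l, ((a + k) + j)))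
      = fun l => g (l + k) := by
    funext l
    rw [hg]
    simp only
    rw [fall_fact' k l]
    have h5 : l + k = k + l := by ring
    rw [h5, Finset.prod_range_add]
    have h6 : ∀ i ∈ Finset.range l, a + ((k + i : ℕ):ℝ) = (a + k) + i := by
      intro i _; push_cast; ring
    rw [Finset.prod_congr rfl h6]
    have hfac : ((k + l).factorial : ℝ) ≠ 0 := Nat.cast_ne_zero.mpr (k+l).factorial_ne_zero
    have hfac2 : ((l.factorial : ℝ)) ≠ 0 := Nat.cast_ne_zero.mpr l.factorial_ne_zero
    field_simp
    ring
  have hsum2 := (hasSum_negBinom' (show (0:ℝ) < a + k by positivity) hp0.le hp1).mul_left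
      ((1 - p) ^ a * p ^ k * ∏ j ∈ Finset.range k, (a + j))
  rw [hshift] at hsum2
  have hsum3 := (hasSum_nat_add_iff (f := g) k).mp hsum2
  rw [Finset.sum_eq_zero hgzero, add_zero] at hsum3
  refine (congrArg (HasSum g) ?_).mp hsum3
  have h9 : (1 - p) ^ a * (1 - p) ^ (-(a + (k:ℝ))) = ((1 - p) ^ k)⁻¹ := by
    rw [← Real.rpow_add h1p, show a + -(a + (k:ℝ)) = -(k:ℝ) by ring,
      Real.rpow_neg h1p.le, Real.rpow_natCast]
  have h8 : (β / (α - β)) ^ k = p ^ k * ((1 - p) ^ k)⁻¹ := by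
    rw [show β / (α - β) = p / (1 - p) by rw [hp]; field_simp, div_pow, div_eq_mul_inv]
  rw [h8, ← h9]
  ring

end Aux

/-- The orthogonality measure `μ_{α,β,σ}`: the gamma distribution when `α = β`, and the
negative binomial (Pascal) distribution on `(α-β)ℕ₀` when `α ≠ β`. Here `η = αβ`. -/
noncomputable def muM (α β σ : ℝ) : Measure ℝ :=
  if α = β then
    volume.withDensity fun x =>
      ENNReal.ofReal (if 0 < x then
        (Real.Gamma (σ / (α * β)))⁻¹ * α ^ (-(σ / (α * β))) * x ^ (σ / (α * β) - 1)
          * Real.exp (-x / α)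
      else 0)
  else
    Measure.sum fun m : ℕ =>
      ENNReal.ofReal ((1 - β / α) ^ (σ / (α * β)) * (β / α) ^ m * ((m.factorial : ℝ))⁻¹ *
        ∏ j ∈ Finset.range m, (σ / (α * β) + j)) • Measure.dirac ((α - β) * m)

theorem stmt_7 (α β σ : ℝ) (hβ : 0 < β) (hαβ : β ≤ α) (hσ : 0 < σ)
    (S : ℕ → ℕ → ℝ)
    (hS : ∀ n, 1 ≤ n → ∀ z : ℝ,
      z ^ n = ∑ k ∈ Finset.Icc 1 n, S n k * ∏ j ∈ Finset.range k, (z - j))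
    (n : ℕ) (hn : 1 ≤ n) :
    ∫ x, x ^ n ∂(muM α β σ) =
      ∑ k ∈ Finset.Icc 1 n, (α - β) ^ (n - k) * S n k * ∏ j ∈ Finset.range k, (σ / α + j * β) := by
  have hα : (0:ℝ) < α := lt_of_lt_of_le hβ hαβ
  rcases eq_or_lt_of_le hαβ with heq | hlt
  · -- α = β
    subst heq
    rw [muM, if_pos rfl, gamma_case' β σ hβ hσ n]
    rw [Finset.sum_eq_single n]
    · rw [Nat.sub_self, pow_zero, one_mul, Snn_eq_one' hn (hS n hn), one_mul]
      calc (β:ℝ) ^ n * ∏ j ∈ Finset.range n, (σ / (β * β) + j)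
          = ∏ j ∈ Finset.range n, (β * (σ / (β * β) + j)) := by
            rw [Finset.prod_mul_distrib, Finset.prod_const, Finset.card_range]
        _ = ∏ j ∈ Finset.range n, (σ / β + j * β) := by
            apply Finset.prod_congr rfl
            intro j _
            field_simp
    · intro k hk hkn
      have hklt : k < n := lt_of_le_of_ne (Finset.mem_Icc.mp hk).2 hkn
      rw [sub_self, zero_pow (Nat.sub_ne_zero_of_lt hklt), zero_mul, zero_mul]
    · intro h
      exact absurd (Finset.mem_Icc.mpr ⟨hn, le_rfl⟩) h
  · -- β < α
    rw [muM, if_neg (ne_of_gt hlt)]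
    have hd : (0:ℝ) < α - β := by linarith
    have hwnn : ∀ m : ℕ, (0:ℝ) ≤ (1 - β / α) ^ (σ / (α * β)) * (β / α) ^ m *
        ((m.factorial : ℝ))⁻¹ * ∏ j ∈ Finset.range m, (σ / (α * β) + j) := by
      intro m
      have h1 : (0:ℝ) ≤ (1 - β / α) ^ (σ / (α * β)) :=
        Real.rpow_nonneg (by rw [sub_nonneg, div_le_one hα]; exact hαβ) _
      have h2 : (0:ℝ) ≤ ∏ j ∈ Finset.range m, (σ / (α * β) + j) :=
        Finset.prod_nonneg fun j _ => by positivity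
      positivity
    -- pointwise expansion of the n-th power
    have hterm : ∀ m : ℕ, ((1 - β / α) ^ (σ / (α * β)) * (β / α) ^ m *
          ((m.factorial : ℝ))⁻¹ * ∏ j ∈ Finset.range m, (σ / (α * β) + j)) *
          ((α - β) * (m:ℝ)) ^ n
        = ∑ k ∈ Finset.Icc 1 n, ((α - β) ^ n * S n k) *
            (((1 - β / α) ^ (σ / (α * β)) * (β / α) ^ m * ((m.factorial : ℝ))⁻¹ *
              ∏ j ∈ Finset.range m, (σ / (α * β) + j)) *
              ∏ j ∈ Finset.range k, ((m:ℝ) - j)) := by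
      intro m
      rw [mul_pow, hS n hn (m:ℝ), Finset.mul_sum, Finset.mul_sum]
      apply Finset.sum_congr rfl
      intro k _
      ring
    have hsum : HasSum (fun m : ℕ => ((1 - β / α) ^ (σ / (α * β)) * (β / α) ^ m *
          ((m.factorial : ℝ))⁻¹ * ∏ j ∈ Finset.range m, (σ / (α * β) + j)) *
          ((α - β) * (m:ℝ)) ^ n)
        (∑ k ∈ Finset.Icc 1 n, ((α - β) ^ n * S n k) *
          ((β / (α - β)) ^ k * ∏ j ∈ Finset.range k, (σ / (α * β) + j))) := by
      have h := hasSum_sum (s := Finset.Icc 1 n)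
        (f := fun k m => ((α - β) ^ n * S n k) *
            (((1 - β / α) ^ (σ / (α * β)) * (β / α) ^ m * ((m.factorial : ℝ))⁻¹ *
              ∏ j ∈ Finset.range m, (σ / (α * β) + j)) * ∏ j ∈ Finset.range k, ((m:ℝ) - j)))
        (a := fun k => ((α - β) ^ n * S n k) *
            ((β / (α - β)) ^ k * ∏ j ∈ Finset.range k, (σ / (α * β) + j)))
        (fun k _ => (hasSum_w_fall' α β σ hβ hlt hσ k).mul_left _)
      have heq : (fun m : ℕ => ∑ k ∈ Finset.Icc 1 n, ((α - β) ^ n * S n k) *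
            (((1 - β / α) ^ (σ / (α * β)) * (β / α) ^ m * ((m.factorial : ℝ))⁻¹ *
              ∏ j ∈ Finset.range m, (σ / (α * β) + j)) * ∏ j ∈ Finset.range k, ((m:ℝ) - j)))
          = fun m : ℕ => ((1 - β / α) ^ (σ / (α * β)) * (β / α) ^ m *
            ((m.factorial : ℝ))⁻¹ * ∏ j ∈ Finset.range m, (σ / (α * β) + j)) *
            ((α - β) * (m:ℝ)) ^ n := funext fun m => (hterm m).symm
      rwa [heq] at h
    have hRHS : ∑ k ∈ Finset.Icc 1 n, ((α - β) ^ n * S n k) *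
          ((β / (α - β)) ^ k * ∏ j ∈ Finset.range k, (σ / (α * β) + j))
        = ∑ k ∈ Finset.Icc 1 n, (α - β) ^ (n - k) * S n k *
            ∏ j ∈ Finset.range k, (σ / α + j * β) := by
      apply Finset.sum_congr rfl
      intro k hk
      have hkn : k ≤ n := (Finset.mem_Icc.mp hk).2
      have h1 : (α - β) ^ n * (β / (α - β)) ^ k = (α - β) ^ (n - k) * β ^ k := by
        rw [div_pow, ← pow_sub_mul_pow (α - β) hkn]
        field_simp
      have h2 : β ^ k * ∏ j ∈ Finset.range k, (σ / (α * β) + j)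
          = ∏ j ∈ Finset.range k, (σ / α + j * β) := by
        calc β ^ k * ∏ j ∈ Finset.range k, (σ / (α * β) + j)
            = ∏ j ∈ Finset.range k, (β * (σ / (α * β) + j)) := by
              rw [Finset.prod_mul_distrib, Finset.prod_const, Finset.card_range]
          _ = ∏ j ∈ Finset.range k, (σ / α + j * β) := by
              apply Finset.prod_congr rfl
              intro j _
              field_simp
      calc ((α - β) ^ n * S n k) * ((β / (α - β)) ^ k * ∏ j ∈ Finset.range k, (σ / (α * β) + j))
          = ((α - β) ^ n * (β / (α - β)) ^ k) * S n k *
              ∏ j ∈ Finset.range k, (σ / (α * β) + j) := by ring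
        _ = ((α - β) ^ (n - k) * β ^ k) * S n k *
              ∏ j ∈ Finset.range k, (σ / (α * β) + j) := by rw [h1]
        _ = (α - β) ^ (n - k) * S n k *
              (β ^ k * ∏ j ∈ Finset.range k, (σ / (α * β) + j)) := by ring
        _ = (α - β) ^ (n - k) * S n k * ∏ j ∈ Finset.range k, (σ / α + j * β) := by rw [h2]
    -- measure-theoretic reduction
    set μd : Measure ℝ := Measure.sum fun m : ℕ =>
      ENNReal.ofReal ((1 - β / α) ^ (σ / (α * β)) * (β / α) ^ m * ((m.factorial : ℝ))⁻¹ *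
        ∏ j ∈ Finset.range m, (σ / (α * β) + j)) • Measure.dirac ((α - β) * m) with hμd
    have hN : MeasurableSet {x : ℝ | ¬ (0:ℝ) ≤ x ^ n} := by
      have : {x : ℝ | ¬ (0:ℝ) ≤ x ^ n} = (fun x : ℝ => x ^ n) ⁻¹' Set.Iio 0 := by
        ext x; simp [not_le]
      rw [this]
      exact (continuous_pow n).measurable measurableSet_Iio
    have hae : 0 ≤ᵐ[μd] fun x : ℝ => x ^ n := by
      have hμN : μd {x : ℝ | ¬ (0:ℝ) ≤ x ^ n} = 0 := by
        rw [hμd, Measure.sum_apply _ hN]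
        convert tsum_zero with m
        rw [Measure.smul_apply, Measure.dirac_apply' _ hN]
        have hmem : ((α - β) * (m:ℝ)) ∉ {x : ℝ | ¬ (0:ℝ) ≤ x ^ n} := by
          simp only [Set.mem_setOf_eq, not_not]
          positivity
        rw [Set.indicator_of_notMem hmem, smul_zero]
      exact ae_iff.mpr hμN
    have haes : AEStronglyMeasurable (fun x : ℝ => x ^ n) μd :=
      (continuous_pow n).aestronglyMeasurable
    rw [integral_eq_lintegral_of_nonneg_ae hae haes, hμd, lintegral_sum_measure]
    simp_rw [lintegral_smul_measure, lintegral_dirac]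
    have hconv : ∀ m : ℕ, ENNReal.ofReal ((1 - β / α) ^ (σ / (α * β)) * (β / α) ^ m *
          ((m.factorial : ℝ))⁻¹ * ∏ j ∈ Finset.range m, (σ / (α * β) + j)) *
          ENNReal.ofReal (((α - β) * (m:ℝ)) ^ n)
        = ENNReal.ofReal (((1 - β / α) ^ (σ / (α * β)) * (β / α) ^ m *
          ((m.factorial : ℝ))⁻¹ * ∏ j ∈ Finset.range m, (σ / (α * β) + j)) *
          ((α - β) * (m:ℝ)) ^ n) := fun m => (ENNReal.ofReal_mul (hwnn m)).symm
    simp_rw [smul_eq_mul, hconv]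
    have htnn : ∀ m : ℕ, (0:ℝ) ≤ ((1 - β / α) ^ (σ / (α * β)) * (β / α) ^ m *
        ((m.factorial : ℝ))⁻¹ * ∏ j ∈ Finset.range m, (σ / (α * β) + j)) *
        ((α - β) * (m:ℝ)) ^ n := fun m => mul_nonneg (hwnn m) (by positivity)
    rw [← ENNReal.ofReal_tsum_of_nonneg htnn hsum.summable, hsum.tsum_eq,
      ENNReal.toReal_ofReal (by rw [← hsum.tsum_eq]; exact tsum_nonneg htnn)]
    exact hRHS
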